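/- Let (Ω, 𝔉, (ℱ_k)_{k∈ℕ}, P) be a filtered probability space and p > 1/2. Let (A_k)_{k≥1} be events with A_k ∈ ℱ_k and P(A_k | ℱ_{k−1}) ≥ p almost surely for every k ≥ 1, and define W_k := Σ_{ℓ=1}^{k} (2·1(A_ℓ) − 1). Then lim sup_{k→∞} W_k = +∞ almost surely. -/

import Mathlib

open MeasureTheory Filter

theorem stmt_11 {Ω : Type*} {𝔉 : MeasurableSpace Ω} (P : Measure Ω)
    [IsProbabilityMeasure P]
    (ℱ : Filtration ℕ 𝔉) (p : ℝ) (hp : 1 / 2 < p)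
    (A : ℕ → Set Ω) (hAm : ∀ k, 1 ≤ k → MeasurableSet[ℱ k] (A k))
    (hAp : ∀ k, 1 ≤ k → ∀ᵐ ω ∂P,
      p ≤ (P[Set.indicator (A k) (fun _ => (1 : ℝ))|ℱ (k - 1)]) ω) :
    ∀ᵐ ω ∂P,
      Filter.limsup
        (fun k => ((∑ ℓ ∈ Finset.Icc 1 k,
          (2 * Set.indicator (A ℓ) (fun _ => (1 : ℝ)) ω - 1) : ℝ) : EReal))
        atTop = ⊤ := by
  set W : ℕ → Ω → ℝ := fun k ω => ∑ ℓ ∈ Finset.Icc 1 k,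
      (2 * Set.indicator (A ℓ) (fun _ => (1 : ℝ)) ω - 1) with hW
  -- indicator values in {0,1}
  have hind01 : ∀ ℓ (ω : Ω), Set.indicator (A ℓ) (fun _ => (1 : ℝ)) ω = 0 ∨
      Set.indicator (A ℓ) (fun _ => (1 : ℝ)) ω = 1 := by
    intro ℓ ω
    by_cases h : ω ∈ A ℓ
    · right; simp [Set.indicator_of_mem h]
    · left; simp [Set.indicator_of_notMem h]
  -- adaptedness
  have hadp : StronglyAdapted ℱ W := by
    intro k
    apply Finset.stronglyMeasurable_fun_sum
    intro ℓ hℓ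
    rw [Finset.mem_Icc] at hℓ
    have h1 : StronglyMeasurable[ℱ k] (Set.indicator (A ℓ) (fun _ => (1 : ℝ))) := by
      refine StronglyMeasurable.indicator stronglyMeasurable_const ?_
      exact ℱ.mono hℓ.2 _ (hAm ℓ hℓ.1)
    exact ((h1.const_mul 2).sub stronglyMeasurable_const)
  -- integrability
  have hintind : ∀ ℓ, 1 ≤ ℓ → Integrable (Set.indicator (A ℓ) (fun _ => (1 : ℝ))) P := by
    intro ℓ hℓ
    exact (integrable_const (1 : ℝ)).indicator (ℱ.le ℓ _ (hAm ℓ hℓ))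
  have hint : ∀ k, Integrable (W k) P := by
    intro k
    apply integrable_finset_sum
    intro ℓ hℓ
    rw [Finset.mem_Icc] at hℓ
    exact ((hintind ℓ hℓ.1).const_mul 2).sub (integrable_const 1)
  -- increments
  have hdiff : ∀ k (ω : Ω), W (k + 1) ω - W k ω
      = 2 * Set.indicator (A (k + 1)) (fun _ => (1 : ℝ)) ω - 1 := by
    intro k ω
    have : W (k + 1) ω = W k ω + (2 * Set.indicator (A (k + 1)) (fun _ => (1 : ℝ)) ω - 1) := by
      simp only [hW]
      rw [Finset.sum_Icc_succ_top (by omega : 1 ≤ k + 1)]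
    rw [this]; ring
  -- submartingale
  have hsub : Submartingale W ℱ P := by
    refine submartingale_of_condExp_sub_nonneg_nat hadp hint fun k => ?_
    have heq : W (k + 1) - W k =
        ((2 : ℝ) • Set.indicator (A (k + 1)) (fun _ => (1 : ℝ))) - (fun _ => (1 : ℝ)) := by
      funext ω
      simp only [Pi.sub_apply, Pi.smul_apply, smul_eq_mul]
      exact hdiff k ω
    have h2 : P[W (k + 1) - W k|ℱ k] =ᵐ[P]
        fun ω => 2 * (P[Set.indicator (A (k + 1)) (fun _ => (1 : ℝ))|ℱ k]) ω - 1 := by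
      rw [heq]
      refine (condExp_sub (((hintind (k+1) (by omega)).smul (2:ℝ))) (integrable_const 1) (ℱ k)).trans ?_
      filter_upwards [condExp_smul (μ := P) (m := ℱ k) (2 : ℝ)
        (Set.indicator (A (k + 1)) (fun _ => (1 : ℝ)))] with ω h1
      simp only [Pi.sub_apply, h1, condExp_const (μ := P) (ℱ.le k) (1 : ℝ),
        Pi.smul_apply, smul_eq_mul]
    have h3 := hAp (k + 1) (by omega)
    simp only [Nat.add_sub_cancel] at h3
    filter_upwards [h2, h3] with ω hω hω'
    rw [Pi.zero_apply, hω]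
    nlinarith
  -- bounded increments
  have hbdd : ∀ᵐ ω ∂P, ∀ i, |W (i + 1) ω - W i ω| ≤ ((1 : NNReal) : ℝ) := by
    filter_upwards with ω i
    rw [hdiff]
    rcases hind01 (i + 1) ω with h | h <;> rw [h] <;> norm_num
  -- no convergence possible
  have hnoconv : ∀ ω : Ω, ¬ ∃ c, Tendsto (fun n => W n ω) atTop (nhds c) := by
    rintro ω ⟨c, hc⟩
    have h1 : Tendsto (fun n => W (n + 1) ω - W n ω) atTop (nhds (c - c)) :=
      ((hc.comp (tendsto_add_atTop_nat 1)).sub hc)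
    rw [sub_self] at h1
    have h1' : Tendsto (fun n => |W (n + 1) ω - W n ω|) atTop (nhds 0) := by
      simpa using h1.abs
    have h2 := h1'.eventually (eventually_lt_nhds (show (0:ℝ) < 1/2 by norm_num))
    rcases h2.exists with ⟨n, hn⟩
    rw [hdiff] at hn
    rcases hind01 (n + 1) ω with h | h <;> rw [h] at hn <;> norm_num at hn
  -- conclude
  filter_upwards [hsub.bddAbove_iff_exists_tendsto hbdd] with ω hω
  have hnb : ¬ BddAbove (Set.range fun n => W n ω) := fun hb => hnoconv ω (hω.1 hb)
  rw [EReal.eq_top_iff_forall_lt]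
  intro r
  refine lt_of_lt_of_le (EReal.coe_lt_coe_iff.2 (lt_add_one r)) ?_
  refine le_limsup_of_frequently_le' ?_
  rw [frequently_atTop]
  intro N
  by_contra hcon
  push_neg at hcon
  apply hnb
  rcases ((Finset.range (N + 1)).image (fun n => W n ω)).exists_le with ⟨M, hM⟩
  refine ⟨max M (r + 1), ?_⟩
  rintro y ⟨n, rfl⟩
  rcases le_or_gt n N with h | h
  · exact le_max_of_le_left (hM _ (Finset.mem_image_of_mem _ (Finset.mem_range.2 (by omega))))
  · refine le_max_of_le_right ?_
    exact (EReal.coe_lt_coe_iff.1 (hcon n h.le)).le
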